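/- Let m ∈ ℕ₀, p ∈ ℕ with 0 ≤ m ≤ p, and suppose f(z) = Σ_{k=0}^∞ a_{kp+m} z^{kp+m} is holomorphic on 𝔻 with |f| ≤ 1. Then for all 0 ≤ r < 1: Σ_{k=1}^∞ |a_{2kp+m}| r^{2kp+m} ≤ (r^{2p−m}/(1−r^{2p})) (r^{2m} − |a_m|² r^{2m}), i.e. ≤ (r^{2p+m}/(1−r^{2p}))(1 − |a_m|²). -/

import Mathlib

open Metric Set Complex Filter FormalMultilinearSeries
open scoped Topology Real

/-- Construction of the auxiliary bounded analytic function `W u = ∑ c (j*k) u^j`. -/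
lemma even_tail_exists_W (m p : ℕ) (hp : 1 ≤ p)
    (f : ℂ → ℂ) (c : ℕ → ℂ)
    (hf : ∀ z : ℂ, ‖z‖ < 1 → HasSum (fun k : ℕ => c k * z ^ (k * p + m)) (f z))
    (hb : ∀ z : ℂ, ‖z‖ < 1 → ‖f z‖ ≤ 1)
    (k : ℕ) (hk : 1 ≤ k) :
    ∃ W : ℂ → ℂ, DifferentiableOn ℂ W (ball 0 1) ∧
      (∀ u ∈ ball (0:ℂ) 1, ‖W u‖ ≤ 1) ∧ W 0 = c 0 ∧ HasDerivAt W (c k) 0 := by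
  have hkp : 0 < k * p := Nat.mul_pos hk hp
  -- coefficient growth bound
  have coeff_bound : ∀ ρ : ℝ, 0 < ρ → ρ < 1 → ∃ C : ℝ, 0 ≤ C ∧
      ∀ j, ‖c j‖ * ρ ^ (j * p + m) ≤ C := by
    intro ρ h0 h1
    have hz : ‖(ρ : ℂ)‖ < 1 := by
      simpa [Complex.norm_real, abs_of_pos h0] using h1
    have hs := (hf _ hz).summable
    have ht := hs.tendsto_atTop_zero
    have ht' : Tendsto (fun j => ‖c j‖ * ρ ^ (j * p + m)) atTop (𝓝 0) := by
      have := ht.norm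
      simp only [norm_zero] at this
      convert this using 2 with j
      rw [norm_mul, norm_pow, Complex.norm_real, Real.norm_eq_abs, abs_of_pos h0]
    obtain ⟨C, hC⟩ := ht'.bddAbove_range
    refine ⟨C, le_trans (by positivity) (hC ⟨0, rfl⟩), fun j => hC ⟨j, rfl⟩⟩
  -- the formal power series
  set ps : FormalMultilinearSeries ℂ ℂ ℂ := ofScalars ℂ (fun j => c (j * k)) with hps
  have hrad : 1 ≤ ps.radius := by
    apply ENNReal.le_of_forall_nnreal_lt
    intro a ha
    rcases eq_or_lt_of_le (zero_le : 0 ≤ a) with h0 | h0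
    · simp [← h0]
    set ρ : ℝ := (a : ℝ) ^ ((1 : ℝ) / (k * p))
    have ha1 : (a : ℝ) < 1 := by exact_mod_cast ha
    have hρ0 : 0 < ρ := Real.rpow_pos_of_pos (by exact_mod_cast h0) _
    have hρ1 : ρ < 1 := by
      apply Real.rpow_lt_one (by positivity) ha1
      positivity
    have hρa : ρ ^ (k * p) = (a : ℝ) := by
      rw [← Real.rpow_natCast ρ, ← Real.rpow_mul (le_of_lt (by exact_mod_cast h0))]
      rw [show (((k * p : ℕ) : ℝ)) = (k : ℝ) * (p : ℝ) by push_cast; ring]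
      rw [one_div, inv_mul_cancel₀ (by positivity), Real.rpow_one]
    obtain ⟨C, hC0, hC⟩ := coeff_bound ρ hρ0 hρ1
    apply ps.le_radius_of_bound (C / ρ ^ m)
    intro n
    have h1 : ‖ps n‖ = ‖c (n * k)‖ := ofScalars_norm ℂ _ n
    rw [h1, ← hρa, ← pow_mul, show k * p * n = n * k * p by ring]
    have h2 : ‖c (n * k)‖ * ρ ^ (n * k * p) = ‖c (n * k)‖ * ρ ^ (n * k * p + m) / ρ ^ m := by
      rw [pow_add]; field_simp
    rw [h2]
    gcongr
    exact hC _
  set W : ℂ → ℂ := ps.sum with hW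
  have memball : ∀ u : ℂ, ‖u‖ < 1 → u ∈ Metric.eball (0 : ℂ) ps.radius := by
    intro u hu
    rw [Metric.mem_eball, edist_zero_right]
    calc (‖u‖₊ : ENNReal) < 1 := by exact_mod_cast hu
      _ ≤ ps.radius := hrad
  have hasSumW : ∀ u : ℂ, ‖u‖ < 1 → HasSum (fun j => c (j * k) * u ^ j) (W u) := by
    intro u hu
    have h := ps.hasSum (memball u hu)
    have h2 : ∀ n, (ps n fun _ => u) = c (n * k) * u ^ n := fun n => by
      rw [hps, ofScalars_apply_eq, smul_eq_mul]
    simpa only [h2] using h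
  have honball : HasFPowerSeriesOnBall W ps 0 ps.radius :=
    ps.hasFPowerSeriesOnBall (lt_of_lt_of_le one_pos hrad)
  have hdiff : DifferentiableOn ℂ W (ball 0 1) := by
    intro u hu
    exact (honball.analyticAt_of_mem (by simpa using memball u (by simpa using hu))).differentiableAt.differentiableWithinAt
  have hW0 : W 0 = c 0 := by
    have h1 := hasSumW 0 (by norm_num)
    have h2 : HasSum (fun j => c (j * k) * (0 : ℂ) ^ j) (c (0 * k) * (0:ℂ) ^ 0) :=
      hasSum_single 0 (by intro j hj; simp [zero_pow hj])
    have := h1.unique h2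
    simpa using this
  have hWderiv : HasDerivAt W (c k) 0 := by
    have h := honball.hasFPowerSeriesAt.hasDerivAt
    have h2 : (ps 1 fun _ => 1) = c k := by
      rw [hps, ofScalars_apply_eq]; simp
    rwa [h2] at h
  -- the sphere bound via averaging over roots of unity
  have sphere_bound : ∀ t : ℝ, t ∈ Set.Ioo (0:ℝ) 1 → ∀ u : ℂ, ‖u‖ = t ^ (k * p) →
      ‖W u‖ ≤ (t ^ m)⁻¹ := by
    intro t ht u hu
    obtain ⟨z, hz⟩ := IsAlgClosed.exists_pow_nat_eq u (n := k * p) hkp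
    have hznorm : ‖z‖ = t := by
      have h1 : ‖z‖ ^ (k * p) = t ^ (k * p) := by rw [← hu, ← hz, norm_pow]
      exact (pow_left_inj₀ (norm_nonneg z) (le_of_lt ht.1) hkp.ne').mp h1
    have hulv : ‖u‖ < 1 := by
      rw [hu]; exact pow_lt_one₀ (le_of_lt ht.1) ht.2 hkp.ne'
    have hz0 : z ≠ 0 := by
      intro h; rw [h, norm_zero] at hznorm; exact ht.1.ne hznorm
    set μ : ℂ := Complex.exp (2 * Real.pi * Complex.I / k) with hμ
    have hprim : IsPrimitiveRoot μ k := Complex.isPrimitiveRoot_exp k (by omega)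
    obtain ⟨ξ, hξ⟩ := IsAlgClosed.exists_pow_nat_eq μ (n := p) hp
    have hμnorm : ‖μ‖ = 1 := by
      have h2 : ‖μ‖ ^ k = 1 ^ k := by rw [← norm_pow, hprim.pow_eq_one, norm_one, one_pow]
      exact (pow_left_inj₀ (norm_nonneg μ) zero_le_one (show k ≠ 0 by omega)).mp h2
    have hξnorm : ‖ξ‖ = 1 := by
      have h2 : ‖ξ‖ ^ p = 1 ^ p := by rw [← norm_pow, hξ, hμnorm, one_pow]
      exact (pow_left_inj₀ (norm_nonneg ξ) zero_le_one (show p ≠ 0 by omega)).mp h2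
    set w : ℕ → ℂ := fun t' => ξ ^ t' * z with hwdef
    have hwnorm : ∀ t', ‖w t'‖ = t := fun t' => by
      simp [hwdef, norm_mul, norm_pow, hξnorm, hznorm]
    have hw0 : ∀ t', w t' ≠ 0 := fun t' => by
      intro h; have h2 := hwnorm t'; rw [h, norm_zero] at h2; exact ht.1.ne h2
    have hwlt : ∀ t', ‖w t'‖ < 1 := fun t' => by rw [hwnorm]; exact ht.2
    set S : ℂ := ∑ t' ∈ Finset.range k, (k:ℂ)⁻¹ * ((w t')⁻¹) ^ m * f (w t') with hS
    have hkC : (k:ℂ) ≠ 0 := Nat.cast_ne_zero.mpr (by omega)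
    have key : HasSum (fun j => if k ∣ j then c j * z ^ (j * p) else 0) S := by
      have h1 : ∀ t' ∈ Finset.range k, HasSum
          (fun j => (k:ℂ)⁻¹ * ((w t')⁻¹) ^ m * (c j * (w t') ^ (j * p + m)))
          ((k:ℂ)⁻¹ * ((w t')⁻¹) ^ m * f (w t')) :=
        fun t' _ => (hf (w t') (hwlt t')).mul_left _
      have h2 := hasSum_sum h1
      have h3 : ∀ j, (∑ t' ∈ Finset.range k,
          (k:ℂ)⁻¹ * ((w t')⁻¹) ^ m * (c j * (w t') ^ (j * p + m)))
          = if k ∣ j then c j * z ^ (j * p) else 0 := by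
        intro j
        have e1 : ∀ t', (w t') ^ (j * p) = (μ ^ j) ^ t' * z ^ (j * p) := by
          intro t'
          calc (w t') ^ (j * p) = ξ ^ (t' * (j * p)) * z ^ (j * p) := by
                rw [hwdef]; rw [mul_pow, ← pow_mul]
            _ = (ξ ^ p) ^ (t' * j) * z ^ (j * p) := by
                rw [show t' * (j * p) = p * (t' * j) by ring, pow_mul]
            _ = (μ ^ j) ^ t' * z ^ (j * p) := by
                rw [hξ, ← pow_mul, Nat.mul_comm t' j]
        have hterm : ∀ t', (k:ℂ)⁻¹ * ((w t')⁻¹) ^ m * (c j * (w t') ^ (j * p + m))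
            = (k:ℂ)⁻¹ * (c j * z ^ (j * p)) * (μ ^ j) ^ t' := by
          intro t'
          have hwm : (w t') ^ m ≠ 0 := pow_ne_zero _ (hw0 t')
          rw [pow_add, e1 t', inv_pow]
          field_simp
        simp only [hterm]
        rw [← Finset.mul_sum]
        have hgeom : ∑ t' ∈ Finset.range k, (μ ^ j) ^ t' = if k ∣ j then (k:ℂ) else 0 := by
          by_cases hd : k ∣ j
          · rw [if_pos hd, (hprim.pow_eq_one_iff_dvd j).mpr hd]
            simp
          · rw [if_neg hd]
            have hne : μ ^ j ≠ 1 := fun h => hd ((hprim.pow_eq_one_iff_dvd j).mp h)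
            rw [geom_sum_eq hne]
            have hone : (μ ^ j) ^ k = 1 := by
              rw [← pow_mul, show j * k = k * j by ring, pow_mul, hprim.pow_eq_one, one_pow]
            rw [hone]; simp
        rw [hgeom]
        split_ifs with hd
        · field_simp
        · simp
      simpa only [h3] using h2
    have key2 : HasSum (fun j => c (j * k) * u ^ j) S := by
      have hinj : Function.Injective (fun j : ℕ => j * k) := fun a b h => by
        exact Nat.eq_of_mul_eq_mul_right (by omega) h
      have hvan : ∀ j ∉ Set.range (fun j : ℕ => j * k),
          (if k ∣ j then c j * z ^ (j * p) else 0) = 0 := by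
        intro j hj
        rw [if_neg]
        intro hd; obtain ⟨d, rfl⟩ := hd; exact hj ⟨d, by ring⟩
      have h4 := (hinj.hasSum_iff hvan).mpr key
      have h5 : ∀ j : ℕ, (if k ∣ j * k then c (j * k) * z ^ ((j * k) * p) else 0)
          = c (j * k) * u ^ j := by
        intro j
        rw [if_pos (dvd_mul_left k j), ← hz, ← pow_mul, show k * p * j = j * k * p by ring]
      simpa only [Function.comp_def, h5] using h4
    have hWS : W u = S := (hasSumW u hulv).unique key2
    rw [hWS, hS]
    calc ‖∑ t' ∈ Finset.range k, (k:ℂ)⁻¹ * ((w t')⁻¹) ^ m * f (w t')‖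
        ≤ ∑ t' ∈ Finset.range k, ‖(k:ℂ)⁻¹ * ((w t')⁻¹) ^ m * f (w t')‖ :=
          norm_sum_le _ _
      _ ≤ ∑ t' ∈ Finset.range k, (k:ℝ)⁻¹ * (t ^ m)⁻¹ := by
          apply Finset.sum_le_sum
          intro t' _
          have ht0 : (0:ℝ) < t := ht.1
          have he : ‖(k:ℂ)⁻¹ * (w t')⁻¹ ^ m * f (w t')‖
              = (k:ℝ)⁻¹ * (t ^ m)⁻¹ * ‖f (w t')‖ := by
            rw [norm_mul, norm_mul, norm_inv, norm_pow, norm_inv, Complex.norm_natCast,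
              hwnorm, inv_pow]
          rw [he]
          calc (k:ℝ)⁻¹ * (t ^ m)⁻¹ * ‖f (w t')‖ ≤ (k:ℝ)⁻¹ * (t ^ m)⁻¹ * 1 := by
                apply mul_le_mul_of_nonneg_left (hb _ (hwlt t'))
                positivity
            _ = (k:ℝ)⁻¹ * (t ^ m)⁻¹ := mul_one _
      _ = (t ^ m)⁻¹ := by
          rw [Finset.sum_const, Finset.card_range, nsmul_eq_mul, ← mul_assoc,
            mul_inv_cancel₀ (show (k:ℝ) ≠ 0 from Nat.cast_ne_zero.mpr (by omega)), one_mul]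
  have ball_bound : ∀ t : ℝ, t ∈ Set.Ioo (0:ℝ) 1 → ∀ u : ℂ, ‖u‖ ≤ t ^ (k * p) →
      ‖W u‖ ≤ (t ^ m)⁻¹ := by
    intro t ht u hu
    have hR0 : (0:ℝ) < t ^ (k * p) := pow_pos ht.1 _
    have hR1 : t ^ (k * p) < 1 := pow_lt_one₀ ht.1.le ht.2 hkp.ne'
    have hcl : closure (ball (0:ℂ) (t ^ (k * p))) = closedBall 0 (t ^ (k * p)) :=
      closure_ball 0 hR0.ne'
    apply Complex.norm_le_of_forall_mem_frontier_norm_le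
      (isBounded_ball (x := (0:ℂ)) (r := t ^ (k * p)))
    · refine DifferentiableOn.diffContOnCl ?_
      apply hdiff.mono
      rw [hcl]
      exact closedBall_subset_ball hR1
    · intro v hv
      rw [frontier_ball 0 hR0.ne'] at hv
      exact sphere_bound t ht v (mem_sphere_zero_iff_norm.mp hv)
    · rw [hcl]
      exact mem_closedBall_zero_iff.mpr hu
  have hbound : ∀ u ∈ ball (0:ℂ) 1, ‖W u‖ ≤ 1 := by
    intro u hu
    rw [mem_ball_zero_iff] at hu
    have hlim : Tendsto (fun t : ℝ => (t ^ m)⁻¹) (𝓝[<] (1:ℝ)) (𝓝 1) := by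
      have h1 : Tendsto (fun t : ℝ => (t ^ m)⁻¹) (𝓝 (1:ℝ)) (𝓝 (((1:ℝ) ^ m)⁻¹)) := by
        apply Filter.Tendsto.inv₀ ((continuous_pow m).tendsto 1)
        norm_num
      simpa using h1.mono_left nhdsWithin_le_nhds
    apply ge_of_tendsto hlim
    have hev1 : ∀ᶠ t : ℝ in 𝓝[<] (1:ℝ), ‖u‖ < t ^ (k * p) := by
      have hc : Tendsto (fun t : ℝ => t ^ (k * p)) (𝓝[<] (1:ℝ)) (𝓝 (1:ℝ)) := by
        simpa using ((continuous_pow (k * p)).tendsto (1:ℝ)).mono_left (nhdsWithin_le_nhds (s := Set.Iio (1:ℝ)))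
      exact hc.eventually_const_lt hu
    have hev2 : ∀ᶠ t : ℝ in 𝓝[<] (1:ℝ), (0:ℝ) < t :=
      (eventually_gt_nhds one_pos).filter_mono nhdsWithin_le_nhds
    have hev3 : ∀ᶠ t : ℝ in 𝓝[<] (1:ℝ), t < 1 := eventually_mem_nhdsWithin
    filter_upwards [hev1, hev2, hev3] with t h1 h2 h3
    exact ball_bound t ⟨h2, h3⟩ u h1.le
  exact ⟨W, hdiff, hbound, hW0, hWderiv⟩

/-- Wiener's coefficient inequality for the lacunary series. -/
lemma even_tail_wiener (m p : ℕ) (hp : 1 ≤ p)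
    (f : ℂ → ℂ) (c : ℕ → ℂ)
    (hf : ∀ z : ℂ, ‖z‖ < 1 → HasSum (fun k : ℕ => c k * z ^ (k * p + m)) (f z))
    (hb : ∀ z : ℂ, ‖z‖ < 1 → ‖f z‖ ≤ 1) :
    ‖c 0‖ ≤ 1 ∧ ∀ k : ℕ, 1 ≤ k → ‖c k‖ ≤ 1 - ‖c 0‖ ^ 2 := by
  have hc0 : ‖c 0‖ ≤ 1 := by
    obtain ⟨W, hd, hbd, hW0, _⟩ := even_tail_exists_W m p hp f c hf hb 1 le_rfl
    rw [← hW0]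
    exact hbd 0 (mem_ball_self one_pos)
  refine ⟨hc0, fun k hk => ?_⟩
  obtain ⟨W, hd, hbd, hW0, hder⟩ := even_tail_exists_W m p hp f c hf hb k hk
  rcases eq_or_lt_of_le hc0 with heq | hlt
  · -- boundary case ‖c 0‖ = 1 : W is constant, so c k = 0
    have hmax : IsMaxOn (norm ∘ W) (ball (0:ℂ) 1) 0 := by
      intro u hu
      simp only [Function.comp_apply, Set.mem_setOf_eq]
      calc ‖W u‖ ≤ 1 := hbd u hu
        _ = ‖W 0‖ := by rw [hW0, heq]
    have heqon := Complex.eqOn_of_isPreconnected_of_isMaxOn_norm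
      (convex_ball (0:ℂ) 1).isPreconnected isOpen_ball hd (mem_ball_self one_pos) hmax
    have hev : W =ᶠ[𝓝 (0:ℂ)] Function.const ℂ (W 0) :=
      Filter.eventuallyEq_of_mem (isOpen_ball.mem_nhds (mem_ball_self one_pos)) heqon
    have hz : deriv W 0 = 0 := by
      rw [hev.deriv_eq]
      exact deriv_const _ _
    rw [hder.deriv] at hz
    rw [hz, heq]
    simp
  · -- interior case ‖c 0‖ < 1 : compose with Möbius map, apply Schwarz lemma
    set b0 := c 0 with hb0def
    have hb0 : ‖b0‖ < 1 := hlt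
    have mob : ∀ x : ℂ, ‖x‖ ≤ 1 → ‖x - b0‖ ≤ ‖1 - (starRingEnd ℂ) b0 * x‖ := by
      intro x hx
      have h1 : Complex.normSq (1 - (starRingEnd ℂ) b0 * x) - Complex.normSq (x - b0)
          = (1 - Complex.normSq b0) * (1 - Complex.normSq x) := by
        simp only [Complex.normSq_apply, Complex.sub_re, Complex.sub_im, Complex.mul_re,
          Complex.mul_im, Complex.one_re, Complex.one_im, Complex.conj_re, Complex.conj_im]
        ring
      have hb2 : Complex.normSq b0 ≤ 1 := by
        rw [Complex.normSq_eq_norm_sq]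
        nlinarith [norm_nonneg b0]
      have hx2 : Complex.normSq x ≤ 1 := by
        rw [Complex.normSq_eq_norm_sq]
        nlinarith [norm_nonneg x]
      have h2 : Complex.normSq (x - b0) ≤ Complex.normSq (1 - (starRingEnd ℂ) b0 * x) := by
        nlinarith
      rw [Complex.norm_def, Complex.norm_def]
      exact Real.sqrt_le_sqrt h2
    set g : ℂ → ℂ := fun z => (W z - b0) / (1 - (starRingEnd ℂ) b0 * W z) with hgdef
    have hden : ∀ z ∈ ball (0:ℂ) 1, (1 - (starRingEnd ℂ) b0 * W z) ≠ 0 := by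
      intro z hz
      have hlt1 : ‖(starRingEnd ℂ) b0 * W z‖ < 1 := by
        rw [norm_mul, RCLike.norm_conj]
        calc ‖b0‖ * ‖W z‖ ≤ ‖b0‖ * 1 := mul_le_mul_of_nonneg_left (hbd z hz) (norm_nonneg _)
          _ < 1 := by rw [mul_one]; exact hb0
      intro h
      rw [sub_eq_zero] at h
      rw [← h] at hlt1
      simp at hlt1
    have hgd : DifferentiableOn ℂ g (ball 0 1) := by
      apply DifferentiableOn.div
      · exact hd.sub (differentiableOn_const _)
      · exact (differentiableOn_const _).sub ((differentiableOn_const _).mul hd)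
      · exact hden
    have hg0 : g 0 = 0 := by
      rw [hgdef]
      simp only [hW0]
      simp
    have hgb : ∀ z ∈ ball (0:ℂ) 1, ‖g z‖ ≤ 1 := by
      intro z hz
      rw [hgdef]
      simp only [norm_div]
      apply div_le_one_of_le₀ (mob (W z) (hbd z hz)) (norm_nonneg _)
    have hCne : (1 : ℂ) - (starRingEnd ℂ) b0 * W 0 ≠ 0 := hden 0 (mem_ball_self one_pos)
    have hgder : HasDerivAt g ((c k) / (1 - (starRingEnd ℂ) b0 * b0)) 0 := by
      have h1 : HasDerivAt (fun z => W z - b0) (c k) 0 := hder.sub_const _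
      have h2 : HasDerivAt (fun z => (1:ℂ) - (starRingEnd ℂ) b0 * W z)
          (-((starRingEnd ℂ) b0 * (c k))) 0 := by
        simpa using ((hder.const_mul ((starRingEnd ℂ) b0)).const_sub 1)
      have h3 := h1.div h2 hCne
      convert h3 using 1
      · rfl
      · rfl
      · rfl
      rw [hW0]
      have hne : (1 : ℂ) - (starRingEnd ℂ) b0 * b0 ≠ 0 := by rwa [hW0] at hCne
      field_simp
      ring
    have hderiv_bound : ‖deriv g 0‖ ≤ 1 := by
      have key : ∀ t : ℝ, t ∈ Set.Ioo (0:ℝ) 1 → ‖deriv g 0‖ ≤ t⁻¹ / t := by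
        intro t ht
        apply Complex.norm_deriv_le_div_of_mapsTo_ball
          (hgd.mono (ball_subset_ball ht.2.le))
        · intro z hz
          rw [hg0, mem_closedBall_zero_iff]
          apply le_of_lt
          calc ‖g z‖ ≤ 1 := hgb z (ball_subset_ball ht.2.le hz)
            _ < t⁻¹ := (one_lt_inv₀ ht.1).mpr ht.2
        · exact ht.1
      have hlim : Tendsto (fun t : ℝ => t⁻¹ / t) (𝓝[<] (1:ℝ)) (𝓝 1) := by
        have h1 : ContinuousAt (fun t : ℝ => t⁻¹ / t) 1 := by
          apply ContinuousAt.div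
          · exact continuousAt_id.inv₀ one_ne_zero
          · exact continuousAt_id
          · exact one_ne_zero
        simpa using h1.tendsto.mono_left (nhdsWithin_le_nhds (s := Set.Iio (1:ℝ)))
      apply ge_of_tendsto hlim
      filter_upwards [eventually_mem_nhdsWithin,
        (eventually_gt_nhds one_pos).filter_mono nhdsWithin_le_nhds] with t h1 h2
      exact key t ⟨h2, h1⟩
    rw [hgder.deriv] at hderiv_bound
    have hden_eq : (1:ℂ) - (starRingEnd ℂ) b0 * b0 = ((1 - ‖b0‖^2 : ℝ) : ℂ) := by
      rw [mul_comm, Complex.mul_conj]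
      rw [show Complex.normSq b0 = ‖b0‖^2 by
        rw [Complex.normSq_eq_norm_sq]]
      push_cast
      ring
    rw [hden_eq, norm_div, Complex.norm_real, Real.norm_eq_abs] at hderiv_bound
    have hpos : (0:ℝ) < 1 - ‖b0‖^2 := by nlinarith [norm_nonneg b0]
    rw [abs_of_pos hpos] at hderiv_bound
    calc ‖c k‖ = ‖c k‖ / (1 - ‖b0‖^2) * (1 - ‖b0‖^2) := (div_mul_cancel₀ _ hpos.ne').symm
      _ ≤ 1 * (1 - ‖b0‖^2) := mul_le_mul_of_nonneg_right hderiv_bound hpos.le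
      _ = 1 - ‖b0‖^2 := one_mul _

/-- One-dimensional version of Lemma 2.2: even-indexed tail bound. -/
theorem even_tail_bound (m p : ℕ) (hp : 1 ≤ p) (hm : m ≤ p)
    (f : ℂ → ℂ) (c : ℕ → ℂ)
    (hf : ∀ z : ℂ, ‖z‖ < 1 → HasSum (fun k : ℕ => c k * z ^ (k * p + m)) (f z))
    (hb : ∀ z : ℂ, ‖z‖ < 1 → ‖f z‖ ≤ 1)
    (r : ℝ) (hr0 : 0 ≤ r) (hr1 : r < 1) :
    ∑' k : ℕ, ‖c (2 * (k + 1))‖ * r ^ (2 * (k + 1) * p + m) ≤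
      r ^ (2 * p + m) / (1 - r ^ (2 * p)) * (1 - ‖c 0‖ ^ 2) := by
  obtain ⟨hc0, hwk⟩ := even_tail_wiener m p hp f c hf hb
  set B : ℝ := 1 - ‖c 0‖ ^ 2 with hBdef
  have hB0 : (0:ℝ) ≤ B := by
    rw [hBdef]
    nlinarith [norm_nonneg (c 0)]
  have hrp : r ^ (2 * p) < 1 := pow_lt_one₀ hr0 hr1 (by omega)
  have hrp0 : (0:ℝ) ≤ r ^ (2 * p) := pow_nonneg hr0 _
  have hexp : ∀ k : ℕ, r ^ (2 * (k + 1) * p + m) = r ^ (2 * p + m) * (r ^ (2 * p)) ^ k := by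
    intro k
    rw [← pow_mul, ← pow_add]
    congr 1
    ring
  have hgsum : Summable (fun k : ℕ => r ^ (2 * p + m) * (r ^ (2 * p)) ^ k) :=
    (summable_geometric_of_lt_one hrp0 hrp).mul_left _
  have hBsum : Summable (fun k : ℕ => B * r ^ (2 * (k + 1) * p + m)) := by
    simp only [hexp]
    exact hgsum.mul_left B
  have hterm : ∀ k : ℕ, ‖c (2 * (k + 1))‖ * r ^ (2 * (k + 1) * p + m)
      ≤ B * r ^ (2 * (k + 1) * p + m) := fun k =>
    mul_le_mul_of_nonneg_right (hwk _ (by omega)) (pow_nonneg hr0 _)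
  have hlsum : Summable (fun k : ℕ => ‖c (2 * (k + 1))‖ * r ^ (2 * (k + 1) * p + m)) :=
    Summable.of_nonneg_of_le (fun k => by positivity) hterm hBsum
  calc ∑' k : ℕ, ‖c (2 * (k + 1))‖ * r ^ (2 * (k + 1) * p + m)
      ≤ ∑' k : ℕ, B * r ^ (2 * (k + 1) * p + m) := Summable.tsum_le_tsum hterm hlsum hBsum
    _ = B * ∑' k : ℕ, r ^ (2 * p + m) * (r ^ (2 * p)) ^ k := by
        simp only [hexp]
        exact tsum_mul_left
    _ = B * (r ^ (2 * p + m) * (1 - r ^ (2 * p))⁻¹) := by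
        rw [tsum_mul_left, tsum_geometric_of_lt_one hrp0 hrp]
    _ = r ^ (2 * p + m) / (1 - r ^ (2 * p)) * B := by
        rw [div_eq_mul_inv]
        ring
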